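/- Let g be convex and L_{∇g}-smooth on a real inner product space and F(b) = g(x̂(b)) + r(b) the exact upper-level objective. Suppose at iteration k, x̃ₖ approximates x̂(bₖ) with ‖x̃ₖ − x̂(bₖ)‖ ≤ ε̄ and x̃ₖ₊₁ approximates x̂(bₖ₊₁) with ‖x̃ₖ₊₁ − x̂(bₖ₊₁)‖ ≤ ε̄. If ℓ(x, b) := g(x) + r(b) satisfies ψ := ℓ(x̃ₖ₊₁, bₖ₊₁) + ‖∇ₓℓ(x̃ₖ₊₁, bₖ₊₁)‖ε̄ + (L_{∇g}/2)ε̄² − ℓ(x̃ₖ, bₖ) + ‖∇ₓℓ(x̃ₖ, bₖ)‖ε̄ + λαₖ‖zₖ‖² ≤ 0, then F(bₖ₊₁) − F(bₖ) ≤ −λαₖ‖zₖ‖². -/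

import Mathlib

open RealInnerProductSpace

lemma descent_lemma {X : Type*} [NormedAddCommGroup X] [InnerProductSpace ℝ X]
    (g : X → ℝ) (g' : X → X) (Lg : ℝ) (hLg : 0 ≤ Lg)
    (hdiff : ∀ x, HasFDerivAt g (InnerProductSpace.toDualMap ℝ X (g' x)) x)
    (hlip : ∀ x y, ‖g' x - g' y‖ ≤ Lg * ‖x - y‖)
    (x y : X) : g y ≤ g x + ⟪g' x, y - x⟫ + Lg / 2 * ‖y - x‖ ^ 2 := by
  set v := y - x with hv
  set φ : ℝ → ℝ := fun t => g (x + t • v) - t * ⟪g' x, v⟫ - Lg / 2 * t ^ 2 * ‖v‖ ^ 2 with hφ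
  have hφd : ∀ t : ℝ, HasDerivAt φ
      (⟪g' (x + t • v), v⟫ - ⟪g' x, v⟫ - Lg * t * ‖v‖ ^ 2) t := by
    intro t
    have h1 : HasDerivAt (fun t : ℝ => x + t • v) v t := by
      simpa using ((hasDerivAt_id t).smul_const v).const_add x
    have h2 : HasDerivAt (fun t : ℝ => g (x + t • v)) (⟪g' (x + t • v), v⟫) t := by
      have := (hdiff (x + t • v)).comp_hasDerivAt t h1
      simpa [Function.comp_def] using this
    have h3 : HasDerivAt (fun t : ℝ => t * ⟪g' x, v⟫) (⟪g' x, v⟫) t := by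
      simpa using (hasDerivAt_id t).mul_const (⟪g' x, v⟫)
    have h4 : HasDerivAt (fun t : ℝ => Lg / 2 * t ^ 2 * ‖v‖ ^ 2) (Lg * t * ‖v‖ ^ 2) t := by
      have := (((hasDerivAt_pow 2 t).const_mul (Lg / 2)).mul_const (‖v‖ ^ 2))
      rw [show Lg * t * ‖v‖ ^ 2 = Lg / 2 * (((2:ℕ):ℝ) * t ^ (2 - 1)) * ‖v‖ ^ 2 by push_cast; ring]
      exact this
    exact (h2.sub h3).sub h4
  have hderiv : ∀ t : ℝ, deriv φ t = ⟪g' (x + t • v), v⟫ - ⟪g' x, v⟫ - Lg * t * ‖v‖ ^ 2 :=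
    fun t => (hφd t).deriv
  have hnonpos : ∀ t ∈ Set.Ioo (0:ℝ) 1, deriv φ t ≤ 0 := by
    intro t ht
    rw [hderiv]
    have h5 : ⟪g' (x + t • v), v⟫ - ⟪g' x, v⟫ = ⟪g' (x + t • v) - g' x, v⟫ := by
      rw [inner_sub_left]
    rw [h5]
    have h6 : ⟪g' (x + t • v) - g' x, v⟫ ≤ ‖g' (x + t • v) - g' x‖ * ‖v‖ :=
      real_inner_le_norm _ _
    have h7 : ‖g' (x + t • v) - g' x‖ ≤ Lg * ‖t • v‖ := by
      have := hlip (x + t • v) x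
      simpa using this
    have h8 : ‖t • v‖ = t * ‖v‖ := by
      rw [norm_smul, Real.norm_eq_abs, abs_of_pos ht.1]
    have h9 : ‖g' (x + t • v) - g' x‖ * ‖v‖ ≤ Lg * t * ‖v‖ * ‖v‖ := by
      apply mul_le_mul_of_nonneg_right _ (norm_nonneg v)
      calc ‖g' (x + t • v) - g' x‖ ≤ Lg * ‖t • v‖ := h7
        _ = Lg * t * ‖v‖ := by rw [h8]; ring
    nlinarith [h6, h9]
  have hanti : AntitoneOn φ (Set.Icc 0 1) := by
    apply antitoneOn_of_deriv_nonpos (convex_Icc 0 1)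
    · have hdf : Differentiable ℝ φ := fun t => (hφd t).differentiableAt
      exact hdf.continuous.continuousOn
    · intro t _
      exact (hφd t).differentiableAt.differentiableWithinAt
    · intro t ht
      rw [interior_Icc] at ht
      exact hnonpos t ht
  have h10 : φ 1 ≤ φ 0 := hanti (by norm_num) (by norm_num) (by norm_num)
  have h11 : x + (1:ℝ) • v = y := by rw [one_smul, hv]; abel
  simp only [hφ, h11, zero_smul, add_zero, one_pow, zero_pow, one_mul, mul_zero, zero_mul,
    sub_zero] at h10
  linarith

theorem maid_sufficient_decrease
    {X H : Type*} [NormedAddCommGroup X] [InnerProductSpace ℝ X]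
    [NormedAddCommGroup H] [InnerProductSpace ℝ H]
    (g : X → ℝ) (g' : X → X) (Lg : ℝ) (hLg : 0 ≤ Lg)
    (hdiff : ∀ x, HasFDerivAt g (InnerProductSpace.toDualMap ℝ X (g' x)) x)
    (hconv : ∀ x y, g y ≥ g x + ⟪g' x, y - x⟫)
    (hlip : ∀ x y, ‖g' x - g' y‖ ≤ Lg * ‖x - y‖)
    (r : H → ℝ) (xhat : H → X)
    (F : H → ℝ) (hF : ∀ b, F b = g (xhat b) + r b)
    (ℓ : X → H → ℝ) (hℓ : ∀ x b, ℓ x b = g x + r b)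
    (bk bk1 : H) (xk xk1 : X) (εbar : ℝ) (hεbar : 0 ≤ εbar)
    (hxk : ‖xk - xhat bk‖ ≤ εbar) (hxk1 : ‖xk1 - xhat bk1‖ ≤ εbar)
    (lam αk : ℝ) (hlam : 0 < lam) (hαk : 0 < αk) (zk : H)
    (hψ : ℓ xk1 bk1 + ‖g' xk1‖ * εbar + Lg / 2 * εbar ^ 2
        - ℓ xk bk + ‖g' xk‖ * εbar + lam * αk * ‖zk‖ ^ 2 ≤ 0) :
    F bk1 - F bk ≤ -(lam * αk * ‖zk‖ ^ 2) := by
  -- upper bound on g (xhat bk1)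
  have hub : g (xhat bk1) ≤ g xk1 + ‖g' xk1‖ * εbar + Lg / 2 * εbar ^ 2 := by
    have hd := descent_lemma g g' Lg hLg hdiff hlip xk1 (xhat bk1)
    have hcs : ⟪g' xk1, xhat bk1 - xk1⟫ ≤ ‖g' xk1‖ * ‖xhat bk1 - xk1‖ :=
      real_inner_le_norm _ _
    have hn : ‖xhat bk1 - xk1‖ ≤ εbar := by rwa [norm_sub_rev]
    have h1 : ‖g' xk1‖ * ‖xhat bk1 - xk1‖ ≤ ‖g' xk1‖ * εbar :=
      mul_le_mul_of_nonneg_left hn (norm_nonneg _)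
    have h2 : ‖xhat bk1 - xk1‖ ^ 2 ≤ εbar ^ 2 :=
      pow_le_pow_left₀ (norm_nonneg _) hn 2
    have h3 : Lg / 2 * ‖xhat bk1 - xk1‖ ^ 2 ≤ Lg / 2 * εbar ^ 2 :=
      mul_le_mul_of_nonneg_left h2 (by linarith)
    linarith
  -- lower bound on g (xhat bk)
  have hlb : g xk - ‖g' xk‖ * εbar ≤ g (xhat bk) := by
    have hc := hconv xk (xhat bk)
    have hcs : -(‖g' xk‖ * ‖xhat bk - xk‖) ≤ ⟪g' xk, xhat bk - xk⟫ := by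
      have := real_inner_le_norm (g' xk) (xk - xhat bk)
      have h2 : ⟪g' xk, xk - xhat bk⟫ = -⟪g' xk, xhat bk - xk⟫ := by
        rw [← inner_neg_right]; congr 1; abel
      rw [norm_sub_rev] at this
      linarith [this, h2 ▸ this]
    have hn : ‖xhat bk - xk‖ ≤ εbar := by rwa [norm_sub_rev]
    have h1 : ‖g' xk‖ * ‖xhat bk - xk‖ ≤ ‖g' xk‖ * εbar :=
      mul_le_mul_of_nonneg_left hn (norm_nonneg _)
    linarith
  rw [hF, hF]
  rw [hℓ, hℓ] at hψ
  linarith
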